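/- (Binomial sum bound from the union-bound step of the scan test analysis.) Let n, r be integers with 1 ≤ r < n, and let δ > 0 be a real number with e·(r/n)^δ < 1. Then Σ_{k=1}^{r} binom(n,k)·(k/n)^{(1+δ)·k} ≤ e·(r/n)^δ / (1 − e·(r/n)^δ). -/

import Mathlib

open Finset

/-- Each term of the sum is at most `(e·(r/n)^δ)^k`. -/
lemma term_bound (n r k : ℕ) (hk1 : 1 ≤ k) (hkr : k ≤ r) (hrn : r < n)
    (δ : ℝ) (hδ : 0 < δ) :
    (n.choose k : ℝ) * ((k : ℝ) / (n : ℝ)) ^ ((1 + δ) * (k : ℝ)) ≤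
      (Real.exp 1 * ((r : ℝ) / (n : ℝ)) ^ δ) ^ k := by
  have hn : (0 : ℝ) < n := by
    have : 0 < n := lt_of_le_of_lt (Nat.zero_le r) hrn
    exact_mod_cast this
  have hk : (0 : ℝ) < k := by exact_mod_cast hk1
  have hx : (0 : ℝ) < (k : ℝ) / n := by positivity
  -- rewrite the rpow as a nat pow
  have h1 : ((k : ℝ) / (n : ℝ)) ^ ((1 + δ) * (k : ℝ))
      = (((k : ℝ) / n) * ((k : ℝ) / n) ^ δ) ^ k := by
    rw [Real.rpow_mul hx.le, Real.rpow_natCast, Real.rpow_add hx, Real.rpow_one]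
  rw [h1, mul_pow, mul_pow]
  have hbinom : (n.choose k : ℝ) * ((k : ℝ) / n) ^ k ≤ Real.exp 1 ^ k := by
    have h2 : (n.choose k : ℝ) ≤ (n : ℝ) ^ k / (k.factorial : ℝ) :=
      Nat.choose_le_pow_div k n
    have h3 : (k : ℝ) ^ k / (k.factorial : ℝ) ≤ Real.exp (k : ℝ) :=
      Real.pow_div_factorial_le_exp (k : ℝ) (by positivity) k
    have h4 : Real.exp (k : ℝ) = Real.exp 1 ^ k := by
      rw [← Real.exp_nat_mul, mul_one]
    have hfac : (0 : ℝ) < (k.factorial : ℝ) := by positivity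
    calc (n.choose k : ℝ) * ((k : ℝ) / n) ^ k
        ≤ ((n : ℝ) ^ k / (k.factorial : ℝ)) * ((k : ℝ) / n) ^ k := by
          apply mul_le_mul_of_nonneg_right h2 (by positivity)
      _ = (k : ℝ) ^ k / (k.factorial : ℝ) := by
          field_simp
          rw [← mul_pow, mul_div_cancel₀ _ hn.ne']
      _ ≤ Real.exp (k : ℝ) := h3
      _ = Real.exp 1 ^ k := h4
  have hmono : (((k : ℝ) / n) ^ δ) ^ k ≤ (((r : ℝ) / n) ^ δ) ^ k := by
    apply pow_le_pow_left₀ (by positivity)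
    apply Real.rpow_le_rpow hx.le _ hδ.le
    apply div_le_div_of_nonneg_right _ hn.le
    exact_mod_cast hkr
  calc (n.choose k : ℝ) * (((k : ℝ) / n) ^ k * (((k : ℝ) / n) ^ δ) ^ k)
      = ((n.choose k : ℝ) * ((k : ℝ) / n) ^ k) * (((k : ℝ) / n) ^ δ) ^ k := by ring
    _ ≤ Real.exp 1 ^ k * (((r : ℝ) / n) ^ δ) ^ k := by
        apply mul_le_mul hbinom hmono (by positivity)
        positivity

/-- **Binomial sum bound** from the union-bound step of the scan test analysis:
for `1 ≤ r < n` and `δ > 0` with `e·(r/n)^δ < 1`,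
`Σ_{k=1}^r C(n,k)·(k/n)^{(1+δ)k} ≤ e·(r/n)^δ / (1 - e·(r/n)^δ)`. -/
theorem binomial_sum_bound (n r : ℕ) (hr1 : 1 ≤ r) (hrn : r < n)
    (δ : ℝ) (hδ : 0 < δ)
    (hkey : Real.exp 1 * ((r : ℝ) / (n : ℝ)) ^ δ < 1) :
    ∑ k ∈ Finset.Icc 1 r, (n.choose k : ℝ) * ((k : ℝ) / (n : ℝ)) ^ ((1 + δ) * (k : ℝ)) ≤
      Real.exp 1 * ((r : ℝ) / (n : ℝ)) ^ δ / (1 - Real.exp 1 * ((r : ℝ) / (n : ℝ)) ^ δ) := by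
  set x := Real.exp 1 * ((r : ℝ) / (n : ℝ)) ^ δ with hxdef
  have hn : (0 : ℝ) < n := by
    have : 0 < n := lt_of_le_of_lt (Nat.zero_le r) hrn
    exact_mod_cast this
  have hr : (0 : ℝ) < r := by exact_mod_cast hr1
  have hx0 : 0 < x := by
    apply mul_pos (Real.exp_pos 1)
    exact Real.rpow_pos_of_pos (by positivity) δ
  have h1x : 0 < 1 - x := by linarith
  have hsum : ∑ k ∈ Finset.Icc 1 r, (n.choose k : ℝ) * ((k : ℝ) / (n : ℝ)) ^ ((1 + δ) * (k : ℝ))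
      ≤ ∑ k ∈ Finset.Icc 1 r, x ^ k := by
    apply Finset.sum_le_sum
    intro k hk
    rw [Finset.mem_Icc] at hk
    exact term_bound n r k hk.1 hk.2 hrn δ hδ
  refine hsum.trans ?_
  -- geometric sum bound
  have hxne : x ≠ 1 := ne_of_lt hkey
  have h : ∑ k ∈ Finset.Icc 1 r, x ^ k = (x ^ (r + 1) - 1) / (x - 1) - 1 := by
    rw [← Finset.Ico_add_one_right_eq_Icc, Finset.sum_Ico_eq_sub _ (by omega), geom_sum_eq hxne]
    simp
  rw [h, le_div_iff₀ h1x]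
  have hkey2 : ((x ^ (r + 1) - 1) / (x - 1) - 1) * (1 - x) = x - x ^ (r + 1) := by
    field_simp [sub_ne_zero.mpr hxne]
    ring
  rw [hkey2]
  have : (0:ℝ) ≤ x ^ (r + 1) := by positivity
  linarith
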